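/- Let X be a real normed linear space, f, g ∈ X* with ‖f‖ = ‖g‖ = 1, ε > 0, and suppose {x ∈ B(X) : f(x) > ε} ⊆ {x : g(x) > 0}. Then there exists a real number t with |1 − t| ≤ ε and ‖f − t·g‖ ≤ ε. -/

import Mathlib

open NormedSpace

theorem aux_eq_smul {X : Type*} [NormedAddCommGroup X] [NormedSpace ℝ X]
    (g K : X →ₗ[ℝ] ℝ) (h : LinearMap.ker g ≤ LinearMap.ker K) :
    ∃ t : ℝ, K = t • g := by
  have : ⨅ _ : Unit, LinearMap.ker g ≤ LinearMap.ker K := by simpa using h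
  have hspan := mem_span_of_iInf_ker_le_ker (L := fun _ : Unit => g) this
  simp only [Set.range_const] at hspan
  rcases Submodule.mem_span_singleton.1 hspan with ⟨t, ht⟩
  exact ⟨t, ht.symm⟩

/-- Quantitative core of the parallel hyperplane lemma: `f` is within `ε`
of `t • g` for some `t` with `|1 - t| ≤ ε`. -/
theorem stmt_1 {X : Type*} [NormedAddCommGroup X] [NormedSpace ℝ X]
    (f g : StrongDual ℝ X) (hf : ‖f‖ = 1) (hg : ‖g‖ = 1) (ε : ℝ) (hε : 0 < ε)
    (h : ∀ x : X, ‖x‖ ≤ 1 → ε < f x → 0 < g x) :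
    ∃ t : ℝ, |1 - t| ≤ ε ∧ ‖f - t • g‖ ≤ ε := by
  rcases le_or_gt 1 ε with hε1 | hε1
  · refine ⟨0, by simpa using hε1, ?_⟩
    simpa [hf] using hε1
  -- key: |f x| ≤ ε ‖x‖ on ker g
  have key : ∀ x : X, g x = 0 → |f x| ≤ ε * ‖x‖ := by
    intro x hgx
    rcases eq_or_ne x 0 with rfl | hx
    · simp
    have hxn : 0 < ‖x‖ := norm_pos_iff.2 hx
    rw [abs_le]
    constructor
    · by_contra hc
      push_neg at hc
      have h1 : ε < f (-(‖x‖⁻¹ • x)) := by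
        simp only [map_neg, map_smul, smul_eq_mul]
        rw [show -(‖x‖⁻¹ * f x) = ‖x‖⁻¹ * (-f x) by ring, lt_inv_mul_iff₀ hxn]
        nlinarith
      have := h (-(‖x‖⁻¹ • x)) (by simp [norm_smul, abs_of_pos (inv_pos.2 hxn), inv_mul_cancel₀ hxn.ne']) h1
      simp [map_neg, map_smul, hgx] at this
    · by_contra hc
      push_neg at hc
      have h1 : ε < f (‖x‖⁻¹ • x) := by
        simp only [map_smul, smul_eq_mul]
        rw [lt_inv_mul_iff₀ hxn, mul_comm]
        exact hc
      have := h (‖x‖⁻¹ • x) (by simp [norm_smul, abs_of_pos (inv_pos.2 hxn), inv_mul_cancel₀ hxn.ne']) h1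
      simp [map_smul, hgx] at this
  -- restrict f to ker g and extend by Hahn-Banach
  set K : Subspace ℝ X := LinearMap.ker (g : X →ₗ[ℝ] ℝ) with hK
  have hfK : ‖f.comp K.subtypeL‖ ≤ ε := by
    apply ContinuousLinearMap.opNorm_le_bound _ hε.le
    intro x
    simpa using key x x.2
  obtain ⟨φ, hφ_ext, hφ_norm⟩ := exists_extension_norm_eq K (f.comp K.subtypeL)
  have hφ : ‖φ‖ ≤ ε := hφ_norm ▸ hfK
  -- f - φ vanishes on ker g, hence equals t • g
  have hker : LinearMap.ker (g : X →ₗ[ℝ] ℝ) ≤ LinearMap.ker ((f - φ : X →L[ℝ] ℝ) : X →ₗ[ℝ] ℝ) := by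
    intro x hx
    have := hφ_ext ⟨x, hx⟩
    simp only [ContinuousLinearMap.coe_comp', Function.comp_apply, Submodule.coe_subtypeL',
      Submodule.coe_subtype] at this
    simp [LinearMap.mem_ker, this]
  obtain ⟨t, ht⟩ := aux_eq_smul _ _ hker
  have htfun : ∀ x : X, f x - φ x = t * g x := by
    intro x
    have := congrArg (fun (L : X →ₗ[ℝ] ℝ) => L x) ht
    simpa using this
  have hsub : ‖f - t • g‖ ≤ ε := by
    have : f - t • g = φ := by
      ext x
      have := htfun x
      simp only [ContinuousLinearMap.sub_apply, ContinuousLinearMap.smul_apply, smul_eq_mul]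
      linarith
    rw [this]; exact hφ
  -- show t > 0
  obtain ⟨x, hx1, hx2⟩ := f.exists_lt_apply_of_lt_opNorm (r := (1 + ε) / 2)
    (by rw [hf]; linarith)
  -- WLOG f x > (1+ε)/2
  have hx2' : ∃ y : X, ‖y‖ ≤ 1 ∧ (1 + ε) / 2 < f y := by
    rcases le_or_gt (f x) 0 with hfx | hfx
    · exact ⟨-x, by simpa using hx1.le, by
        rw [map_neg]; rw [Real.norm_eq_abs, abs_of_nonpos hfx] at hx2; exact hx2⟩
    · exact ⟨x, hx1.le, by rwa [Real.norm_eq_abs, abs_of_pos hfx] at hx2⟩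
  obtain ⟨y, hy1, hy2⟩ := hx2'
  have hgy : 0 < g y := h y hy1 (by linarith)
  have hφy : |φ y| ≤ ε := by
    calc |φ y| = ‖φ y‖ := rfl
    _ ≤ ‖φ‖ * ‖y‖ := φ.le_opNorm y
    _ ≤ ε * 1 := by
        apply mul_le_mul hφ hy1 (norm_nonneg _) hε.le
    _ = ε := mul_one ε
  have htgy : 0 < t * g y := by
    have := htfun y
    have := abs_le.1 hφy
    linarith
  have ht0 : 0 < t := by
    by_contra h0
    push_neg at h0
    nlinarith
  refine ⟨t, ?_, hsub⟩
  have habs : |‖f‖ - ‖t • g‖| ≤ ‖f - t • g‖ := abs_norm_sub_norm_le _ _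
  rw [hf, norm_smul, hg, mul_one, Real.norm_eq_abs, abs_of_pos ht0] at habs
  exact habs.trans hsub
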